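/- arXiv:2603.08452 — 3 statements merged into one kernel-verified Lean document; each statement's English description precedes it below -/
import Mathlib

section
/- The group Γ = ⟨a, b ∣ a⁹ = 1, b⁹ = 1, b a b⁻¹ = a⁴, a b a⁻¹ = b⁴⟩ has order exactly 27 and is nonabelian of exponent 9; in particular it is not isomorphic to the Heisenberg group over ℤ/3ℤ (which has exponent 3). -/
def pol2Rels : Set (FreeGroup (Fin 2)) :=
  {FreeGroup.of 0 ^ 9, FreeGroup.of 1 ^ 9,
   FreeGroup.of 1 * FreeGroup.of 0 * (FreeGroup.of 1)⁻¹ * (FreeGroup.of 0 ^ 4)⁻¹,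
   FreeGroup.of 0 * FreeGroup.of 1 * (FreeGroup.of 0)⁻¹ * (FreeGroup.of 1 ^ 4)⁻¹}

/-- The Heisenberg group over `ℤ/3ℤ`: upper unitriangular `3 × 3` matrices,
modelled as triples `(a, b, c)` (entries `(1,2)`, `(2,3)`, `(1,3)`) with the
multiplication induced by matrix multiplication. -/
def Heis3 : Type := ZMod 3 × ZMod 3 × ZMod 3

instance : Group Heis3 where
  mul x y := (x.1 + y.1, x.2.1 + y.2.1, x.2.2 + y.2.2 + x.1 * y.2.1)
  one := ((0 : ZMod 3), (0 : ZMod 3), (0 : ZMod 3))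
  inv x := (-x.1, -x.2.1, -x.2.2 + x.1 * x.2.1)
  mul_assoc := by
    rintro ⟨a, b, c⟩ ⟨d, e, f⟩ ⟨g, h, i⟩
    show ((a + d + g, b + e + h, c + f + a * e + i + (a + d) * h) :
        ZMod 3 × ZMod 3 × ZMod 3) =
      (a + (d + g), b + (e + h), c + (f + i + d * h) + a * (e + h))
    exact Prod.ext (by ring) (Prod.ext (by ring) (by ring))
  one_mul := by
    rintro ⟨a, b, c⟩
    show ((0 + a, 0 + b, 0 + c + 0 * b) : ZMod 3 × ZMod 3 × ZMod 3) = (a, b, c)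
    exact Prod.ext (by ring) (Prod.ext (by ring) (by ring))
  mul_one := by
    rintro ⟨a, b, c⟩
    show ((a + 0, b + 0, c + 0 + a * 0) : ZMod 3 × ZMod 3 × ZMod 3) = (a, b, c)
    exact Prod.ext (by ring) (Prod.ext (by ring) (by ring))
  inv_mul_cancel := by
    rintro ⟨a, b, c⟩
    show ((-a + a, -b + b, -c + a * b + c + -a * b) : ZMod 3 × ZMod 3 × ZMod 3) =
      ((0 : ZMod 3), (0 : ZMod 3), (0 : ZMod 3))
    exact Prod.ext (by ring) (Prod.ext (by ring) (by ring))

/-! ### Auxiliary: a concrete model `GG` of the presented group -/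

instance : Fintype Heis3 := inferInstanceAs (Fintype (ZMod 3 × ZMod 3 × ZMod 3))
instance : DecidableEq Heis3 := inferInstanceAs (DecidableEq (ZMod 3 × ZMod 3 × ZMod 3))

/-- carry term -/
def Cf (j l : ZMod 3) : ZMod 9 := (((j.val + l.val) / 3 * 3 : ℕ) : ZMod 9)

def GG : Type := ZMod 9 × ZMod 3

instance : DecidableEq GG := inferInstanceAs (DecidableEq (ZMod 9 × ZMod 3))
instance : Fintype GG := inferInstanceAs (Fintype (ZMod 9 × ZMod 3))

def gmul (x y : ZMod 9 × ZMod 3) : GG :=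
  (x.1 + 4 ^ x.2.val * y.1 - Cf x.2 y.2, x.2 + y.2)

def ginv (x : ZMod 9 × ZMod 3) : GG :=
  (-(4 ^ (-x.2).val * x.1) + Cf (-x.2) x.2, -x.2)

lemma GG_L1 : ∀ j l : ZMod 3, (4 : ZMod 9) ^ (j + l).val = 4 ^ j.val * 4 ^ l.val := by decide

lemma GG_L3 : ∀ j l m : ZMod 3,
    Cf j l + Cf (j + l) m = (4 : ZMod 9) ^ j.val * Cf l m + Cf j (l + m) := by decide

instance : Group GG where
  mul x y := gmul x y
  one := show ZMod 9 × ZMod 3 from (0, 0)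
  inv x := ginv x
  mul_assoc := by
    rintro ⟨a, j⟩ ⟨b, l⟩ ⟨c, m⟩
    show gmul (gmul (a, j) (b, l)) (c, m) = gmul (a, j) (gmul (b, l) (c, m))
    unfold gmul
    refine Prod.ext ?_ (add_assoc j l m)
    show a + 4 ^ j.val * b - Cf j l + 4 ^ (j + l).val * c - Cf (j + l) m
       = a + 4 ^ j.val * (b + 4 ^ l.val * c - Cf l m) - Cf j (l + m)
    rw [GG_L1]
    linear_combination -(GG_L3 j l m)
  one_mul := by
    rintro ⟨a, j⟩
    show gmul (0, 0) (a, j) = (a, j)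
    unfold gmul
    refine Prod.ext ?_ (zero_add j)
    show (0 : ZMod 9) + 4 ^ (0 : ZMod 3).val * a - Cf 0 j = a
    have h0 : Cf 0 j = 0 := by revert j; decide
    rw [h0, show (0 : ZMod 3).val = 0 from rfl]
    ring
  mul_one := by
    rintro ⟨a, j⟩
    show gmul (a, j) (0, 0) = (a, j)
    unfold gmul
    refine Prod.ext ?_ (add_zero j)
    show a + 4 ^ j.val * 0 - Cf j 0 = a
    have h0 : Cf j 0 = 0 := by revert j; decide
    rw [h0]
    ring
  inv_mul_cancel := by
    rintro ⟨a, j⟩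
    show gmul (ginv (a, j)) (a, j) = (0, 0)
    unfold gmul ginv
    refine Prod.ext ?_ (neg_add_cancel j)
    show -(4 ^ (-j).val * a) + Cf (-j) j + 4 ^ (-j).val * a - Cf (-j) j = 0
    ring

def a0 : GG := show ZMod 9 × ZMod 3 from (1, 0)
def b0 : GG := show ZMod 9 × ZMod 3 from (0, 1)
def unGG : GG → ZMod 9 × ZMod 3 := fun g => g

def fgen : Fin 2 → GG := fun i => if i = 0 then a0 else b0

lemma fgen0 : fgen 0 = a0 := rfl
lemma fgen1 : fgen 1 = b0 := rfl

lemma GG_rels : ∀ r ∈ pol2Rels, FreeGroup.lift fgen r = 1 := by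
  intro r hr
  simp only [pol2Rels, Set.mem_insert_iff, Set.mem_singleton_iff] at hr
  rcases hr with rfl | rfl | rfl | rfl <;>
    simp only [map_mul, map_pow, map_inv, FreeGroup.lift_apply_of, fgen0, fgen1] <;> decide

lemma GG_rep : ∀ g : GG, a0 ^ (unGG g).1.val * b0 ^ (unGG g).2.val = g := by decide

lemma GG_pow9 : ∀ g : GG, g ^ 9 = 1 := by decide

lemma a0_order : orderOf a0 = 9 := by
  haveI : Fact (Nat.Prime 3) := ⟨by norm_num⟩
  have := orderOf_eq_prime_pow (x := a0) (p := 3) (n := 1)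
    (by decide) (by decide)
  norm_num at this
  exact this

lemma GG_exponent : Monoid.exponent GG = 9 := by
  refine Nat.dvd_antisymm (Monoid.exponent_dvd_of_forall_pow_eq_one GG_pow9) ?_
  rw [← a0_order]
  exact Monoid.order_dvd_exponent a0

/-! ### The presented group -/

def Aa : PresentedGroup pol2Rels := PresentedGroup.of 0
def Bb : PresentedGroup pol2Rels := PresentedGroup.of 1

lemma rel_one {r : FreeGroup (Fin 2)} (h : r ∈ pol2Rels) :
    PresentedGroup.mk pol2Rels r = 1 :=
  (QuotientGroup.eq_one_iff r).mpr (Subgroup.subset_normalClosure h)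

lemma hA9 : Aa ^ 9 = 1 := by
  have := rel_one (show FreeGroup.of 0 ^ 9 ∈ pol2Rels from Or.inl rfl)
  rwa [map_pow] at this

lemma hB9 : Bb ^ 9 = 1 := by
  have := rel_one (show FreeGroup.of 1 ^ 9 ∈ pol2Rels from Or.inr (Or.inl rfl))
  rwa [map_pow] at this

lemma hBA : Bb * Aa = Aa ^ 4 * Bb := by
  have h := rel_one (show FreeGroup.of 1 * FreeGroup.of 0 * (FreeGroup.of 1)⁻¹ *
      (FreeGroup.of 0 ^ 4)⁻¹ ∈ pol2Rels from Or.inr (Or.inr (Or.inl rfl)))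
  simp only [map_mul, map_inv, map_pow] at h
  have h' : Bb * Aa * Bb⁻¹ = Aa ^ 4 := by rwa [mul_inv_eq_one] at h
  rw [← h']; group

lemma hAB : Aa * Bb = Bb ^ 4 * Aa := by
  have h := rel_one (show FreeGroup.of 0 * FreeGroup.of 1 * (FreeGroup.of 0)⁻¹ *
      (FreeGroup.of 1 ^ 4)⁻¹ ∈ pol2Rels from Or.inr (Or.inr (Or.inr rfl)))
  simp only [map_mul, map_inv, map_pow] at h
  have h' : Aa * Bb * Aa⁻¹ = Bb ^ 4 := by rwa [mul_inv_eq_one] at h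
  rw [← h']; group

lemma hB3 : Bb ^ 3 = Aa ^ 6 := by
  have h1 : Bb ^ 3 * Aa ^ 4 * Bb = Aa * Bb := by
    calc Bb ^ 3 * Aa ^ 4 * Bb = Bb ^ 3 * (Aa ^ 4 * Bb) := by group
    _ = Bb ^ 3 * (Bb * Aa) := by rw [hBA]
    _ = Bb ^ 4 * Aa := by group
    _ = Aa * Bb := hAB.symm
  have h2 : Bb ^ 3 * Aa ^ 4 = Aa := mul_right_cancel h1
  have h3 : Bb ^ 3 = Aa * (Aa ^ 4)⁻¹ := eq_mul_inv_of_mul_eq h2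
  rw [h3, show Aa * (Aa ^ 4)⁻¹ = Aa ^ 6 * (Aa ^ 9)⁻¹ by group, hA9, inv_one, mul_one]

lemma hcomm1 : ∀ k : ℕ, Bb * Aa ^ k = Aa ^ (4 * k) * Bb := by
  intro k
  induction k with
  | zero => simp
  | succ n ih =>
    calc Bb * Aa ^ (n + 1) = Bb * Aa ^ n * Aa := by rw [pow_succ, ← mul_assoc]
    _ = Aa ^ (4 * n) * (Bb * Aa) := by rw [ih]; group
    _ = Aa ^ (4 * n) * (Aa ^ 4 * Bb) := by rw [hBA]
    _ = Aa ^ (4 * (n + 1)) * Bb := by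
        rw [← mul_assoc, ← pow_add, show 4 * n + 4 = 4 * (n + 1) by ring]

lemma hcomm : ∀ j k : ℕ, Bb ^ j * Aa ^ k = Aa ^ (4 ^ j * k) * Bb ^ j := by
  intro j
  induction j with
  | zero => intro k; simp
  | succ n ih =>
    intro k
    calc Bb ^ (n + 1) * Aa ^ k = Bb ^ n * (Bb * Aa ^ k) := by
          rw [pow_succ, mul_assoc]
    _ = Bb ^ n * (Aa ^ (4 * k) * Bb) := by rw [hcomm1]
    _ = (Bb ^ n * Aa ^ (4 * k)) * Bb := by rw [mul_assoc]
    _ = Aa ^ (4 ^ n * (4 * k)) * Bb ^ n * Bb := by rw [ih]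
    _ = Aa ^ (4 ^ (n + 1) * k) * Bb ^ (n + 1) := by
        rw [mul_assoc, ← pow_succ, show 4 ^ n * (4 * k) = 4 ^ (n + 1) * k by ring]

lemma hApow_inv : ∀ i : ℕ, (Aa ^ i)⁻¹ = Aa ^ (8 * i) := fun i =>
  inv_eq_of_mul_eq_one_right (by
    rw [← pow_add, show i + 8 * i = 9 * i by ring, pow_mul, hA9, one_pow])

lemma hBpow_inv : ∀ i : ℕ, (Bb ^ i)⁻¹ = Bb ^ (8 * i) := fun i =>
  inv_eq_of_mul_eq_one_right (by
    rw [← pow_add, show i + 8 * i = 9 * i by ring, pow_mul, hB9, one_pow])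

def SS : Subgroup (PresentedGroup pol2Rels) where
  carrier := {x | ∃ i j : ℕ, x = Aa ^ i * Bb ^ j}
  one_mem' := ⟨0, 0, by simp⟩
  mul_mem' := by
    rintro x y ⟨i, j, rfl⟩ ⟨k, l, rfl⟩
    refine ⟨i + 4 ^ j * k, j + l, ?_⟩
    calc Aa ^ i * Bb ^ j * (Aa ^ k * Bb ^ l)
        = Aa ^ i * (Bb ^ j * Aa ^ k) * Bb ^ l := by group
    _ = Aa ^ i * (Aa ^ (4 ^ j * k) * Bb ^ j) * Bb ^ l := by rw [hcomm]
    _ = Aa ^ (i + 4 ^ j * k) * Bb ^ (j + l) := by rw [pow_add, pow_add]; group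
  inv_mem' := by
    rintro x ⟨i, j, rfl⟩
    refine ⟨4 ^ (8 * j) * (8 * i), 8 * j, ?_⟩
    rw [mul_inv_rev, hApow_inv, hBpow_inv, hcomm]

lemma mem_SS (x : PresentedGroup pol2Rels) : x ∈ SS := by
  refine PresentedGroup.generated_by pol2Rels SS (fun j => ?_) x
  fin_cases j
  · exact ⟨1, 0, by simp [Aa]⟩
  · exact ⟨0, 1, by simp [Bb]⟩

lemma hApow_mod (i : ℕ) : Aa ^ i = Aa ^ (i % 9) := by
  conv_lhs => rw [← Nat.div_add_mod i 9]
  rw [pow_add, pow_mul, hA9, one_pow, one_mul]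

def Ftup : Fin 9 × Fin 3 → PresentedGroup pol2Rels := fun p =>
  Aa ^ (p.1 : ℕ) * Bb ^ (p.2 : ℕ)

lemma Ftup_surj : Function.Surjective Ftup := by
  intro x
  obtain ⟨i, j, rfl⟩ := mem_SS x
  refine ⟨(⟨(i + 6 * (j / 3)) % 9, Nat.mod_lt _ (by norm_num)⟩,
           ⟨j % 3, Nat.mod_lt _ (by norm_num)⟩), ?_⟩
  show Aa ^ ((i + 6 * (j / 3)) % 9) * Bb ^ (j % 3) = Aa ^ i * Bb ^ j
  rw [← hApow_mod]
  conv_rhs => rw [← Nat.div_add_mod j 3]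
  rw [pow_add (Bb), pow_mul, hB3, ← pow_mul, pow_add, pow_mul,
    show Aa ^ 6 = Aa ^ (6 : ℕ) from rfl]
  rw [← pow_mul, ← mul_assoc, ← pow_add]

noncomputable def φGG : PresentedGroup pol2Rels →* GG := PresentedGroup.toGroup GG_rels

lemma φGG_A : φGG Aa = a0 := by
  simpa [Aa, φGG] using (PresentedGroup.toGroup.of GG_rels (x := 0)).trans fgen0

lemma φGG_B : φGG Bb = b0 := by
  simpa [Bb, φGG] using (PresentedGroup.toGroup.of GG_rels (x := 1)).trans fgen1

lemma φGG_surj : Function.Surjective φGG := by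
  intro g
  refine ⟨Aa ^ (unGG g).1.val * Bb ^ (unGG g).2.val, ?_⟩
  rw [map_mul, map_pow, map_pow, φGG_A, φGG_B, GG_rep]

instance : Finite (PresentedGroup pol2Rels) := Finite.of_surjective Ftup Ftup_surj

lemma card_GG : Nat.card GG = 27 := by
  rw [Nat.card_eq_fintype_card]; decide

lemma card_Γ : Nat.card (PresentedGroup pol2Rels) = 27 := by
  refine le_antisymm ?_ ?_
  · have := Nat.card_le_card_of_surjective Ftup Ftup_surj
    simpa using this
  · have := Nat.card_le_card_of_surjective φGG φGG_surj
    rwa [card_GG] at this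

lemma φGG_bij : Function.Bijective φGG :=
  (Nat.bijective_iff_surjective_and_card φGG).mpr ⟨φGG_surj, by rw [card_Γ, card_GG]⟩

noncomputable def eGG : PresentedGroup pol2Rels ≃* GG := MulEquiv.ofBijective φGG φGG_bij

/-- `Γ = ⟨a, b ∣ a⁹, b⁹, bab⁻¹ = a⁴, aba⁻¹ = b⁴⟩` has order exactly 27, is
nonabelian, has exponent 9, and is not isomorphic to the Heisenberg group over
`ℤ/3ℤ` (which has exponent 3). -/
theorem stmt_3 :
    Nat.card (PresentedGroup pol2Rels) = 27 ∧
    ¬ (∀ x y : PresentedGroup pol2Rels, x * y = y * x) ∧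
    Monoid.exponent (PresentedGroup pol2Rels) = 9 ∧
    IsEmpty (PresentedGroup pol2Rels ≃* Heis3) := by
  refine ⟨card_Γ, ?_, ?_, ?_⟩
  · intro h
    have h1 : a0 * b0 = b0 * a0 := by
      rw [← φGG_A, ← φGG_B, ← map_mul, ← map_mul, h Aa Bb]
    exact absurd h1 (by decide)
  · rw [Monoid.exponent_eq_of_mulEquiv eGG, GG_exponent]
  · refine ⟨fun e => ?_⟩
    have hcube : ∀ x : Heis3, x ^ 3 = 1 := by decide
    have hA3 : Aa ^ 3 = 1 := by
      have : e (Aa ^ 3) = 1 := by rw [map_pow, hcube]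
      have := congrArg e.symm this
      simpa using this
    have : φGG (Aa ^ 3) = 1 := by rw [hA3, map_one]
    rw [map_pow, φGG_A] at this
    exact absurd this (by decide)
end

section
/- Let V = (ℤ/3ℤ)² with basis e₁, e₂, and let G be the set V × C₃ (C₃ = ⟨σ⟩ cyclic of order 3) with multiplication (ξ, g)(η, h) = (ξ + g·η + ψ(g,h), gh), where C₃ acts on V via the identification V ≅ ω(C₃) ⊗ C₃ with ω(C₃) the augmentation ideal of ℤ[C₃], and ψ(g,h) = (g−1) ⊗ h̄. Then the elements a = (0, σ) and b = (0, σ²) satisfy a⁹ = 1, b⁹ = 1, b a b⁻¹ = a⁴, and a b a⁻¹ = b⁴, and G is generated by a and b. -/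
/-- `V = ω(C₃) ⊗ ℤ/3ℤ ≅ (ℤ/3ℤ)²`, in the basis `e₁ = (σ-1)⊗σ̄`, `e₂ = (σ²-1)⊗σ̄`,
where `ω(C₃)` is the augmentation ideal of `ℤ[C₃]` (with ℤ-basis `σ-1`, `σ²-1`). -/
abbrev V3 : Type := ZMod 3 × ZMod 3

/-- The action of `σ^i ∈ C₃` on `V`, induced by left multiplication on `ω(C₃)`:
`σ·(σ-1) = (σ²-1)-(σ-1)` and `σ·(σ²-1) = -(σ-1)`, so `σ` sends
`x e₁ + y e₂` to `(-x-y) e₁ + x e₂`, and `σ²` sends it to `y e₁ + (-x-y) e₂`. -/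
def rho3 : ZMod 3 → V3 → V3 := fun i v =>
  if i = 0 then v else if i = 1 then (-v.1 - v.2, v.1) else (v.2, -v.1 - v.2)

/-- The cocycle `ψ(g, h) = (g - 1) ⊗ h̄`: since `h̄ = j·σ̄` for `h = σ^j`,
`ψ(σ^i, σ^j)` is `0` if `i = 0`, `j·e₁` if `i = 1`, and `j·e₂` if `i = 2`. -/
def psi3 : ZMod 3 → ZMod 3 → V3 := fun i j =>
  if i = 0 then 0 else if i = 1 then (j, 0) else ((0 : ZMod 3), j)

lemma zmod3_cases : ∀ i : ZMod 3, i = 0 ∨ i = 1 ∨ i = 2 := by decide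

lemma rho3_add (i : ZMod 3) (u v : V3) : rho3 i (u + v) = rho3 i u + rho3 i v := by
  simp only [rho3]
  split_ifs <;> refine Prod.ext ?_ ?_ <;> simp <;> ring

lemma rho3_comp (i j : ZMod 3) (v : V3) : rho3 i (rho3 j v) = rho3 (i + j) v := by
  rcases zmod3_cases i with hi | hi | hi <;> rcases zmod3_cases j with hj | hj | hj <;>
    subst hi <;> subst hj <;>
    simp [rho3, Prod.ext_iff,
      show ((1 : ZMod 3) + 1) = 2 from by decide, show ((1 : ZMod 3) + 2) = 0 from by decide,
      show ((2 : ZMod 3) + 1) = 0 from by decide, show ((2 : ZMod 3) + 2) = 1 from by decide,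
      show (2 : ZMod 3) ≠ 0 from by decide, show (2 : ZMod 3) ≠ 1 from by decide] <;>
    first
      | rfl
      | (constructor <;> ring)
      | ring

lemma rho3_zero_apply : ∀ v : V3, rho3 0 v = v := by decide

lemma rho3_zero_right : ∀ i : ZMod 3, rho3 i 0 = 0 := by decide

lemma psi3_zero_left : ∀ j : ZMod 3, psi3 0 j = 0 := by decide

lemma psi3_zero_right : ∀ i : ZMod 3, psi3 i 0 = 0 := by decide

lemma psi3_cocycle : ∀ i j k : ZMod 3,
    psi3 i j + psi3 (i + j) k = rho3 i (psi3 j k) + psi3 i (j + k) := by decide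

lemma rho3_neg (j : ZMod 3) (v : V3) : rho3 j (-v) = -rho3 j v := by
  have h := rho3_add j v (-v)
  rw [add_neg_cancel, rho3_zero_right] at h
  exact (neg_eq_of_add_eq_zero_right h.symm).symm

/-- The group `G = V × C₃` with `(ξ, g)(η, h) = (ξ + g·η + ψ(g,h), gh)`, where
`C₃ = ⟨σ⟩` is written as `ZMod 3` (`σ^i ↔ i`). -/
def G4 : Type := V3 × ZMod 3

instance : DecidableEq G4 := inferInstanceAs (DecidableEq (V3 × ZMod 3))
instance : Fintype G4 := inferInstanceAs (Fintype (V3 × ZMod 3))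

instance : Group G4 where
  mul x y := (x.1 + rho3 x.2 y.1 + psi3 x.2 y.2, x.2 + y.2)
  one := ((0 : V3), (0 : ZMod 3))
  inv x := (rho3 (-x.2) (-(x.1 + psi3 x.2 (-x.2))), -x.2)
  mul_assoc := by
    rintro ⟨x, i⟩ ⟨y, j⟩ ⟨z, k⟩
    show ((x + rho3 i y + psi3 i j + rho3 (i + j) z + psi3 (i + j) k, i + j + k) :
        V3 × ZMod 3) =
      (x + rho3 i (y + rho3 j z + psi3 j k) + psi3 i (j + k), i + (j + k))
    refine Prod.ext ?_ (add_assoc i j k)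
    rw [rho3_add, rho3_add, rho3_comp]
    have h := psi3_cocycle i j k
    linear_combination h
  one_mul := by
    rintro ⟨v, j⟩
    show (((0 : V3) + rho3 0 v + psi3 0 j, (0 : ZMod 3) + j) : V3 × ZMod 3) = (v, j)
    rw [rho3_zero_apply, psi3_zero_left, add_zero, zero_add, zero_add]
  mul_one := by
    rintro ⟨v, j⟩
    show ((v + rho3 j 0 + psi3 j 0, j + (0 : ZMod 3)) : V3 × ZMod 3) = (v, j)
    rw [rho3_zero_right, psi3_zero_right, add_zero, add_zero, add_zero]
  inv_mul_cancel := by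
    rintro ⟨v, j⟩
    show ((rho3 (-j) (-(v + psi3 j (-j))) + rho3 (-j) v + psi3 (-j) j, -j + j) :
        V3 × ZMod 3) = ((0 : V3), (0 : ZMod 3))
    refine Prod.ext ?_ (neg_add_cancel j)
    rw [rho3_neg, rho3_add]
    have h : ∀ i : ZMod 3, psi3 (-i) i = rho3 (-i) (psi3 i (-i)) := by decide
    rw [h j]
    ring

/-- In `G`, the elements `a = (0, σ)` and `b = (0, σ²)` satisfy `a⁹ = b⁹ = 1`,
`b a b⁻¹ = a⁴`, `a b a⁻¹ = b⁴`, and generate `G`. -/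
theorem stmt_4 (a b : G4) (ha : a = ((0 : V3), (1 : ZMod 3)))
    (hb : b = ((0 : V3), (2 : ZMod 3))) :
    a ^ 9 = 1 ∧ b ^ 9 = 1 ∧ b * a * b⁻¹ = a ^ 4 ∧ a * b * a⁻¹ = b ^ 4 ∧
      Subgroup.closure ({a, b} : Set G4) = ⊤ := by
  have h : ∀ x : G4, ∃ i j : Fin 9, x = a ^ (i : ℕ) * b ^ (j : ℕ) := by
    subst ha hb; decide
  subst ha hb
  refine ⟨by decide, by decide, by decide, by decide, ?_⟩
  rw [eq_top_iff]
  intro x _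
  obtain ⟨i, j, hx⟩ := h x
  rw [hx]
  exact Subgroup.mul_mem _
    (Subgroup.pow_mem _ (Subgroup.subset_closure (Set.mem_insert _ _)) _)
    (Subgroup.pow_mem _ (Subgroup.subset_closure (Set.mem_insert_of_mem _ (Set.mem_singleton _))) _)
end

section
/- Let F = 𝔽₃(t) be the rational function field over 𝔽₃ and define A, B ∈ M₃(F) by A = [[0, 0, 1/t], [2/t, 0, 0], [2t², 2t², 0]] and B = [[0, 2t, 0], [0, 0, 2/t²], [t, 0, t]]. Then det(A) = det(B) = 1 and A, B satisfy (BA)³ = 1, (AB⁻¹A)³ = 1, and (BA)(AB⁻¹A) = (AB⁻¹A)(BA) in SL₃(F). -/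
set_option maxHeartbeats 1000000

instance : Fact (Nat.Prime 3) := ⟨by norm_num⟩

open RatFunc in
/-- The matrices `A`, `B` over `𝔽₃(t)` have determinant 1 and satisfy the
relators `(ba)³`, `(ab⁻¹a)³`, `[ba, ab⁻¹a]` of `Γ`, hence `a ↦ A`, `b ↦ B`
defines a representation `Γ → SL₃(𝔽₃(t))`. -/
theorem stmt_12 (t : RatFunc (ZMod 3)) (ht : t = RatFunc.X)
    (A B : Matrix (Fin 3) (Fin 3) (RatFunc (ZMod 3)))
    (hA : A = !![0, 0, 1 / t; 2 / t, 0, 0; 2 * t ^ 2, 2 * t ^ 2, 0])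
    (hB : B = !![0, 2 * t, 0; 0, 0, 2 / t ^ 2; t, 0, t]) :
    A.det = 1 ∧ B.det = 1 ∧ (B * A) ^ 3 = 1 ∧ (A * B⁻¹ * A) ^ 3 = 1 ∧
      (B * A) * (A * B⁻¹ * A) = (A * B⁻¹ * A) * (B * A) := by
  have h3 : CharP (RatFunc (ZMod 3)) 3 :=
    charP_of_injective_algebraMap (algebraMap (ZMod 3) (RatFunc (ZMod 3))).injective 3
  have ht0 : t ≠ 0 := ht ▸ RatFunc.X_ne_zero
  subst hA hB
  have hBinv : (!![0, 2 * t, 0; 0, 0, 2 / t ^ 2; t, 0, t])⁻¹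
      = !![0, t^2, 1/t; 2/t, 0, 0; 0, 2*t^2, 0] := by
    apply Matrix.inv_eq_right_inv
    ext i j
    fin_cases i <;> fin_cases j <;>
      simp [Matrix.mul_apply, Fin.sum_univ_three, Matrix.vecHead, Matrix.vecTail,
        Matrix.one_apply] <;>
      (try field_simp) <;> ring_nf <;> reduce_mod_char!
  rw [hBinv]
  have hBA : !![0, 2 * t, 0; 0, 0, 2 / t ^ 2; t, 0, t] *
      !![0, 0, 1 / t; 2 / t, 0, 0; 2 * t ^ 2, 2 * t ^ 2, 0]
      = !![1, 0, 0; 1, 1, 0; 2*t^3, 2*t^3, 1] := by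
    ext i j
    fin_cases i <;> fin_cases j <;>
      simp [Matrix.mul_apply, Fin.sum_univ_three, Matrix.vecHead, Matrix.vecTail] <;>
      (try field_simp) <;> ring_nf <;> reduce_mod_char!
  have hX : !![0, 0, 1 / t; 2 / t, 0, 0; 2 * t ^ 2, 2 * t ^ 2, 0] *
      !![0, t^2, 1/t; 2/t, 0, 0; 0, 2*t^2, 0] *
      !![0, 0, 1 / t; 2 / t, 0, 0; 2 * t ^ 2, 2 * t ^ 2, 0]
      = !![1, 0, 0; 2, 1, 0; 2*t^3, t^3, 1] := by
    ext i j
    fin_cases i <;> fin_cases j <;>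
      simp [Matrix.mul_apply, Fin.sum_univ_three, Matrix.vecHead, Matrix.vecTail] <;>
      (try field_simp) <;> ring_nf <;> reduce_mod_char!
  rw [hBA, hX]
  have hBA2 : !![1, 0, 0; 1, 1, 0; 2*t^3, 2*t^3, 1] * !![1, 0, 0; 1, 1, 0; 2*t^3, 2*t^3, 1]
      = !![(1:RatFunc (ZMod 3)), 0, 0; 2, 1, 0; 0, t^3, 1] := by
    ext i j
    fin_cases i <;> fin_cases j <;>
      simp [Matrix.mul_apply, Fin.sum_univ_three, Matrix.vecHead, Matrix.vecTail] <;>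
      ring_nf <;> reduce_mod_char!
  have hBA3 : !![(1:RatFunc (ZMod 3)), 0, 0; 2, 1, 0; 0, t^3, 1] *
      !![1, 0, 0; 1, 1, 0; 2*t^3, 2*t^3, 1] = 1 := by
    ext i j
    fin_cases i <;> fin_cases j <;>
      simp [Matrix.mul_apply, Fin.sum_univ_three, Matrix.vecHead, Matrix.vecTail,
        Matrix.one_apply] <;>
      ring_nf <;> reduce_mod_char!
  have hX2 : !![1, 0, 0; 2, 1, 0; 2*t^3, t^3, 1] * !![1, 0, 0; 2, 1, 0; 2*t^3, t^3, 1]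
      = !![(1:RatFunc (ZMod 3)), 0, 0; 1, 1, 0; 0, 2*t^3, 1] := by
    ext i j
    fin_cases i <;> fin_cases j <;>
      simp [Matrix.mul_apply, Fin.sum_univ_three, Matrix.vecHead, Matrix.vecTail] <;>
      ring_nf <;> reduce_mod_char!
  have hX3 : !![(1:RatFunc (ZMod 3)), 0, 0; 1, 1, 0; 0, 2*t^3, 1] *
      !![1, 0, 0; 2, 1, 0; 2*t^3, t^3, 1] = 1 := by
    ext i j
    fin_cases i <;> fin_cases j <;>
      simp [Matrix.mul_apply, Fin.sum_univ_three, Matrix.vecHead, Matrix.vecTail,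
        Matrix.one_apply] <;>
      ring_nf <;> reduce_mod_char!
  have hcomm : !![1, 0, 0; 1, 1, 0; 2*t^3, 2*t^3, 1] * !![1, 0, 0; 2, 1, 0; 2*t^3, t^3, 1]
      = !![1, 0, 0; 2, 1, 0; 2*t^3, t^3, 1] * !![1, 0, 0; 1, 1, 0; 2*t^3, 2*t^3, 1] := by
    ext i j
    fin_cases i <;> fin_cases j <;>
      simp [Matrix.mul_apply, Fin.sum_univ_three, Matrix.vecHead, Matrix.vecTail] <;>
      ring_nf <;> reduce_mod_char!
  refine ⟨?_, ?_, ?_, ?_, hcomm⟩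
  · simp only [Matrix.det_fin_three, Matrix.cons_val', Matrix.cons_val_zero,
      Matrix.cons_val_one, Matrix.head_cons, Matrix.empty_val',
      Matrix.cons_val_fin_one, Matrix.head_val', Matrix.cons_val_two, Matrix.tail_cons,
      Matrix.of_apply, Matrix.vecHead]
    field_simp
    ring_nf
    reduce_mod_char!
  · simp only [Matrix.det_fin_three, Matrix.cons_val', Matrix.cons_val_zero,
      Matrix.cons_val_one, Matrix.head_cons, Matrix.empty_val',
      Matrix.cons_val_fin_one, Matrix.head_val', Matrix.cons_val_two, Matrix.tail_cons,
      Matrix.of_apply, Matrix.vecHead]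
    field_simp
    ring_nf
    reduce_mod_char!
  · rw [pow_succ, pow_succ, pow_one, hBA2, hBA3]
  · rw [pow_succ, pow_succ, pow_one, hX2, hX3]
end
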